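/- For F ∈ 𝓗₊ ∪ 𝓗₋, the map t ↦ T_F(t) on (0,∞) is nonincreasing and left-continuous, its right limit at t equals T_F^-(t) := inf{ z : F*(e^{-t}, e^{-z}) ≤ 1 }, and the set { t > 0 : T_F(t) ≠ T_F^-(t) } is countable. -/

import Mathlib

open MeasureTheory Filter Set Real
open scoped Classical

/-- The class 𝓗₊. -/
def HPlus (F : ℝ → ℝ → ℝ) : Prop :=
  ContinuousOn (fun p : ℝ × ℝ => F p.1 p.2) {p | 0 < p.1 ∧ 0 < p.2} ∧
  (∀ x y, 0 < x → 0 < y → 0 < F x y) ∧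
  (∀ x x' y y', 0 < x → 0 < y → x ≤ x' → y ≤ y' → F x y ≤ F x' y') ∧
  (∀ a x y, 0 < a → 0 < x → 0 < y → F (a * x) (a * y) = a * F x y) ∧
  (∀ x y, 0 < x → 0 < y → max x y ≤ F x y) ∧
  (∀ y, 0 < y →
    Tendsto (fun x => F x y) (nhdsWithin 0 (Set.Ioi 0)) (nhds y) ∧
    Tendsto (fun x => F y x) (nhdsWithin 0 (Set.Ioi 0)) (nhds y))

/-- The class 𝓗₋. -/
def HMinus (F : ℝ → ℝ → ℝ) : Prop :=
  ContinuousOn (fun p : ℝ × ℝ => F p.1 p.2) {p | 0 < p.1 ∧ 0 < p.2} ∧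
  (∀ x y, 0 < x → 0 < y → 0 < F x y) ∧
  (∀ x x' y y', 0 < x → 0 < y → x ≤ x' → y ≤ y' → F x y ≤ F x' y') ∧
  (∀ a x y, 0 < a → 0 < x → 0 < y → F (a * x) (a * y) = a * F x y) ∧
  (∀ x y, 0 < x → 0 < y → F x y ≤ min x y) ∧
  (∀ y, 0 < y →
    Tendsto (fun x => F x y) atTop (nhds y) ∧
    Tendsto (fun x => F y x) atTop (nhds y))

/-- The associated element F* of 𝓗₊. -/
noncomputable def Fstar (F : ℝ → ℝ → ℝ) : ℝ → ℝ → ℝ :=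
  if HPlus F then F else fun x y => (F x⁻¹ y⁻¹)⁻¹

/-- T_F(t) := sup { z : F*(e^{-t}, e^{-z}) ≥ 1 }. -/
noncomputable def TF (F : ℝ → ℝ → ℝ) (t : ℝ) : ℝ :=
  sSup {z : ℝ | 1 ≤ Fstar F (Real.exp (-t)) (Real.exp (-z))}

/-- T_F^-(t) := inf { z : F*(e^{-t}, e^{-z}) ≤ 1 }. -/
noncomputable def TFminus (F : ℝ → ℝ → ℝ) (t : ℝ) : ℝ :=
  sInf {z : ℝ | Fstar F (Real.exp (-t)) (Real.exp (-z)) ≤ 1}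

/-- r_F := log F*(1,1). -/
noncomputable def rF (F : ℝ → ℝ → ℝ) : ℝ := Real.log (Fstar F 1 1)

/-- Γ_F^{(a,b)} := ∫₀^∞ t^a (T_F(t))^b dt, as an extended nonnegative real. -/
noncomputable def Gamma (F : ℝ → ℝ → ℝ) (a b : ℝ) : ENNReal :=
  ∫⁻ t in Set.Ioi (0 : ℝ), ENNReal.ofReal (t ^ a * (TF F t) ^ b)

/-- F^#(x,y) := F(y,x). -/
def Fsharp (F : ℝ → ℝ → ℝ) : ℝ → ℝ → ℝ := fun x y => F y x

theorem master (g : ℝ → ℝ → ℝ)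
    (hcont : Continuous fun p : ℝ × ℝ => g p.1 p.2)
    (hanti : ∀ t t' z z', t ≤ t' → z ≤ z' → g t' z' ≤ g t z)
    (hlb : ∀ t z, Real.exp (-z) ≤ g t z)
    (hhom : ∀ t z c, g (t + c) (z + c) = Real.exp (-c) * g t z)
    (hlim : ∀ t : ℝ, 0 < t → Tendsto (g t) atTop (nhds (Real.exp (-t)))) :
    (∀ s t : ℝ, 0 < s → s ≤ t → sSup {z | 1 ≤ g t z} ≤ sSup {z | 1 ≤ g s z}) ∧
    (∀ t : ℝ, 0 < t → Tendsto (fun s => sSup {z | 1 ≤ g s z})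
      (nhdsWithin t (Set.Iio t)) (nhds (sSup {z | 1 ≤ g t z}))) ∧
    (∀ t : ℝ, 0 < t → Tendsto (fun s => sSup {z | 1 ≤ g s z})
      (nhdsWithin t (Set.Ioi t)) (nhds (sInf {z | g t z ≤ 1}))) ∧
    Set.Countable {t : ℝ | 0 < t ∧ sSup {z | 1 ≤ g t z} ≠ sInf {z | g t z ≤ 1}} := by
  have hc1 : ∀ t : ℝ, Continuous (g t) := fun t =>
    hcont.comp (continuous_const.prodMk continuous_id)
  have hc2 : ∀ z : ℝ, Continuous (fun t => g t z) := fun z =>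
    hcont.comp (continuous_id.prodMk continuous_const)
  set τ := fun t => sSup {z | 1 ≤ g t z} with hτ
  set σ := fun t => sInf {z | g t z ≤ 1} with hσ
  have hne : ∀ t, Set.Nonempty {z | 1 ≤ g t z} := by
    intro t
    refine ⟨0, ?_⟩
    have := hlb t 0
    simpa using this
  have hz0 : ∀ t : ℝ, 0 < t → ∃ z0, g t z0 < 1 := by
    intro t ht
    have h1 : Real.exp (-t) < 1 := Real.exp_lt_one_iff.2 (by linarith)
    exact ((hlim t ht).eventually_lt_const h1).exists
  have hbddS : ∀ t : ℝ, 0 < t → BddAbove {z | 1 ≤ g t z} := by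
    intro t ht
    obtain ⟨z0, hz0'⟩ := hz0 t ht
    refine ⟨z0, fun z hz => ?_⟩
    by_contra h
    push_neg at h
    have := hanti t t z0 z le_rfl h.le
    exact absurd (le_trans hz this) (not_le.2 hz0')
  have hbddI : ∀ t : ℝ, BddBelow {z | g t z ≤ 1} := by
    intro t
    refine ⟨0, fun z hz => ?_⟩
    have h1 : Real.exp (-z) ≤ 1 := le_trans (hlb t z) hz
    have := Real.exp_le_one_iff.1 h1
    linarith
  have hneI : ∀ t : ℝ, 0 < t → Set.Nonempty {z | g t z ≤ 1} := by
    intro t ht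
    obtain ⟨z0, hz0'⟩ := hz0 t ht
    exact ⟨z0, hz0'.le⟩
  have hSmem : ∀ t : ℝ, 0 < t → 1 ≤ g t (τ t) := by
    intro t ht
    have hcl : IsClosed {z | 1 ≤ g t z} := isClosed_le continuous_const (hc1 t)
    exact hcl.csSup_mem (hne t) (hbddS t ht)
  have hImem : ∀ t : ℝ, 0 < t → g t (σ t) ≤ 1 := by
    intro t ht
    have hcl : IsClosed {z | g t z ≤ 1} := isClosed_le (hc1 t) continuous_const
    exact hcl.csInf_mem (hneI t ht) (hbddI t)
  have hgt : ∀ t z : ℝ, 0 < t → τ t < z → g t z < 1 := by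
    intro t z ht hz
    by_contra h
    push_neg at h
    exact absurd (le_csSup (hbddS t ht) h) (not_le.2 hz)
  have hlt : ∀ t z : ℝ, 0 < t → z < σ t → 1 < g t z := by
    intro t z ht hz
    by_contra h
    push_neg at h
    exact absurd (csInf_le (hbddI t) h) (not_le.2 hz)
  have hστ : ∀ t : ℝ, 0 < t → σ t ≤ τ t := by
    intro t ht
    refine le_of_forall_pos_le_add (fun ε hε => ?_)
    exact csInf_le (hbddI t) (hgt t (τ t + ε) ht (by linarith)).le
  -- monotonicity
  have hmono : ∀ s t : ℝ, 0 < s → s ≤ t → τ t ≤ τ s := by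
    intro s t hs hst
    exact csSup_le_csSup (hbddS s hs) (hne t)
      (fun z hz => le_trans hz (hanti s t z z hst le_rfl))
  -- key inequality
  have hkey : ∀ t s : ℝ, 0 < t → t < s → τ s ≤ σ t + (s - t) := by
    intro t s ht hts
    refine csSup_le (hne s) (fun z hz => ?_)
    set c := s - t with hc
    have hcpos : 0 < c := by simp [hc]; linarith
    have heq : g s z = Real.exp (-c) * g t (z - c) := by
      have := hhom t (z - c) c
      simpa [hc] using this
    by_contra h
    push_neg at h
    have hzc : σ t ≤ z - c := by linarith
    have h1 : g t (z - c) ≤ 1 := le_trans (hanti t t (σ t) (z - c) le_rfl hzc) (hImem t ht)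
    have h2 : g s z ≤ Real.exp (-c) := by
      rw [heq]
      calc Real.exp (-c) * g t (z - c) ≤ Real.exp (-c) * 1 := by
            exact mul_le_mul_of_nonneg_left h1 (Real.exp_pos _).le
        _ = Real.exp (-c) := mul_one _
    have h3 : Real.exp (-c) < 1 := Real.exp_lt_one_iff.2 (by linarith)
    have := hz.out
    linarith
  refine ⟨hmono, ?_, ?_, ?_⟩
  · -- left continuity
    intro t ht
    rw [tendsto_order]
    constructor
    · intro b hb
      filter_upwards [Ioo_mem_nhdsLT_of_mem (show t ∈ Set.Ioc 0 t from ⟨ht, le_rfl⟩)]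
        with s hs
      exact lt_of_lt_of_le hb (hmono s t hs.1 hs.2.le)
    · intro b hb
      set z := (τ t + b) / 2 with hz
      have hz1 : τ t < z := by simp [hz]; linarith
      have hz2 : z < b := by simp [hz]; linarith
      have hg : g t z < 1 := hgt t z ht hz1
      have hopen : IsOpen {s | g s z < 1} := isOpen_lt (hc2 z) continuous_const
      have hmem : {s | g s z < 1} ∈ nhdsWithin t (Set.Iio t) :=
        nhdsWithin_le_nhds (hopen.mem_nhds hg)
      filter_upwards [hmem, Ioo_mem_nhdsLT_of_mem
        (show t ∈ Set.Ioc 0 t from ⟨ht, le_rfl⟩)] with s hs1 hs2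
      have : τ s ≤ z := by
        refine csSup_le (hne s) (fun w hw => ?_)
        by_contra h
        push_neg at h
        exact absurd (le_trans hw (hanti s s z w le_rfl h.le)) (not_le.2 hs1)
      linarith
  · -- right limit
    intro t ht
    rw [tendsto_order]
    constructor
    · intro b hb
      set z := (b + σ t) / 2 with hz
      have hz1 : b < z := by simp [hz]; linarith
      have hz2 : z < σ t := by simp [hz]; linarith
      have hg : 1 < g t z := hlt t z ht hz2
      have hopen : IsOpen {s | 1 < g s z} := isOpen_lt continuous_const (hc2 z)
      have hmem : {s | 1 < g s z} ∈ nhdsWithin t (Set.Ioi t) :=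
        nhdsWithin_le_nhds (hopen.mem_nhds hg)
      filter_upwards [hmem, Ioo_mem_nhdsGT_of_mem
        (show t ∈ Set.Ico t (t + 1) from ⟨le_rfl, by linarith⟩)] with s hs1 hs2
      have hs0 : 0 < s := lt_trans ht hs2.1
      have : z ≤ τ s := le_csSup (hbddS s hs0) hs1.le
      linarith
    · intro b hb
      filter_upwards [Ioo_mem_nhdsGT_of_mem
        (show t ∈ Set.Ico t (t + (b - σ t)) from ⟨le_rfl, by linarith⟩)] with s hs
      have := hkey t s ht hs.1
      have hsb : s - t < b - σ t := by have := hs.2; linarith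
      linarith
  · -- countability
    have hsep : ∀ t t' : ℝ, 0 < t → t < t' → τ t' ≤ σ t := by
      intro t t' ht htt'
      refine le_of_forall_pos_le_add (fun ε hε => ?_)
      set s := min t' (t + ε) with hs
      have hts : t < s := lt_min htt' (by linarith)
      have hst' : s ≤ t' := min_le_left _ _
      have h1 : τ t' ≤ τ s := hmono s t' (lt_trans ht hts) hst'
      have h2 : τ s ≤ σ t + (s - t) := hkey t s ht hts
      have h3 : s - t ≤ ε := by
        have : s ≤ t + ε := min_le_right _ _
        linarith
      linarith
    refine Set.PairwiseDisjoint.countable_of_isOpen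
      (s := fun t => Set.Ioo (σ t) (τ t)) ?_ (fun t _ => isOpen_Ioo) ?_
    · intro t htD t' ht'D hne'
      rcases lt_or_gt_of_ne hne' with h | h
      · refine Set.disjoint_left.2 (fun x hx hx' => ?_)
        have h1 : τ t' ≤ σ t := hsep t t' htD.1 h
        exact absurd (lt_of_lt_of_le hx'.2 h1) (not_lt.2 hx.1.le)
      · refine Set.disjoint_left.2 (fun x hx hx' => ?_)
        have h1 : τ t ≤ σ t' := hsep t' t ht'D.1 h
        exact absurd (lt_of_lt_of_le hx.2 h1) (not_lt.2 hx'.1.le)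
    · intro t htD
      have h1 : σ t ≤ τ t := hστ t htD.1
      have h2 : σ t ≠ τ t := fun h => htD.2 h.symm
      exact Set.nonempty_Ioo.2 (lt_of_le_of_ne h1 h2)

/-- T_F is nonincreasing and left-continuous on (0,∞), its right limit at t equals
T_F^-(t), and the set of t > 0 where T_F(t) ≠ T_F^-(t) is countable. -/
theorem stmt3 (F : ℝ → ℝ → ℝ) (hF : HPlus F ∨ HMinus F) :
    (∀ s t : ℝ, 0 < s → s ≤ t → TF F t ≤ TF F s) ∧
    (∀ t : ℝ, 0 < t →
      Tendsto (TF F) (nhdsWithin t (Set.Iio t)) (nhds (TF F t))) ∧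
    (∀ t : ℝ, 0 < t →
      Tendsto (TF F) (nhdsWithin t (Set.Ioi t)) (nhds (TFminus F t))) ∧
    Set.Countable {t : ℝ | 0 < t ∧ TF F t ≠ TFminus F t} := by
  have key : ∀ g : ℝ → ℝ → ℝ, (∀ t z, g t z = Fstar F (Real.exp (-t)) (Real.exp (-z))) →
      (Continuous fun p : ℝ × ℝ => g p.1 p.2) →
      (∀ t t' z z', t ≤ t' → z ≤ z' → g t' z' ≤ g t z) →
      (∀ t z, Real.exp (-z) ≤ g t z) →
      (∀ t z c, g (t + c) (z + c) = Real.exp (-c) * g t z) →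
      (∀ t : ℝ, 0 < t → Tendsto (g t) atTop (nhds (Real.exp (-t)))) →
      (∀ s t : ℝ, 0 < s → s ≤ t → TF F t ≤ TF F s) ∧
      (∀ t : ℝ, 0 < t → Tendsto (TF F) (nhdsWithin t (Set.Iio t)) (nhds (TF F t))) ∧
      (∀ t : ℝ, 0 < t → Tendsto (TF F) (nhdsWithin t (Set.Ioi t)) (nhds (TFminus F t))) ∧
      Set.Countable {t : ℝ | 0 < t ∧ TF F t ≠ TFminus F t} := by
    intro g hg hcont hanti hlb hhom hlim
    have hTF : TF F = fun t => sSup {z | 1 ≤ g t z} := by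
      funext t; simp only [TF, hg]
    have hTFm : TFminus F = fun t => sInf {z | g t z ≤ 1} := by
      funext t; simp only [TFminus, hg]
    rw [hTF, hTFm]
    exact master g hcont hanti hlb hhom hlim
  rcases hF with h | h
  · have hFs : Fstar F = F := if_pos h
    obtain ⟨hc, hpos, hmono, hhomF, hmax, hlimF⟩ := h
    refine key (fun t z => F (Real.exp (-t)) (Real.exp (-z))) (by simp [hFs]) ?_ ?_ ?_ ?_ ?_
    · have hm : Continuous fun p : ℝ × ℝ => (Real.exp (-p.1), Real.exp (-p.2)) := by fun_prop
      exact hc.comp_continuous hm (fun p => ⟨Real.exp_pos _, Real.exp_pos _⟩)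
    · intro t t' z z' ht hz
      exact hmono _ _ _ _ (Real.exp_pos _) (Real.exp_pos _)
        (Real.exp_le_exp.2 (by linarith)) (Real.exp_le_exp.2 (by linarith))
    · intro t z
      exact le_trans (le_max_right _ _) (hmax _ _ (Real.exp_pos _) (Real.exp_pos _))
    · intro t z c
      have h1 : Real.exp (-(t + c)) = Real.exp (-c) * Real.exp (-t) := by
        rw [← Real.exp_add]; ring_nf
      have h2 : Real.exp (-(z + c)) = Real.exp (-c) * Real.exp (-z) := by
        rw [← Real.exp_add]; ring_nf
      rw [h1, h2]
      exact hhomF _ _ _ (Real.exp_pos _) (Real.exp_pos _) (Real.exp_pos _)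
    · intro t ht
      have h1 := (hlimF (Real.exp (-t)) (Real.exp_pos _)).2
      refine h1.comp ?_
      refine tendsto_nhdsWithin_of_tendsto_nhds_of_eventually_within _
        (Real.tendsto_exp_neg_atTop_nhds_zero) ?_
      exact Eventually.of_forall (fun z => Real.exp_pos _)
  · have hnot : ¬ HPlus F := by
      intro hp
      have h1 := hp.2.2.2.2.1 1 2 one_pos two_pos
      have h2 := h.2.2.2.2.1 1 2 one_pos two_pos
      have : (2:ℝ) ≤ 1 := by
        have hm : max (1:ℝ) 2 = 2 := by norm_num
        have hm' : min (1:ℝ) 2 = 1 := by norm_num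
        calc (2:ℝ) = max 1 2 := hm.symm
          _ ≤ F 1 2 := hp.2.2.2.2.1 1 2 one_pos two_pos
          _ ≤ min 1 2 := h.2.2.2.2.1 1 2 one_pos two_pos
          _ = 1 := hm'
      linarith
    have hFs : Fstar F = fun x y => (F x⁻¹ y⁻¹)⁻¹ := if_neg hnot
    obtain ⟨hc, hpos, hmono, hhomF, hmin, hlimF⟩ := h
    have hgsimp : ∀ t z : ℝ,
        Fstar F (Real.exp (-t)) (Real.exp (-z)) = (F (Real.exp t) (Real.exp z))⁻¹ := by
      intro t z
      rw [hFs]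
      simp [Real.exp_neg, inv_inv]
    refine key (fun t z => (F (Real.exp t) (Real.exp z))⁻¹) (fun t z => (hgsimp t z).symm)
      ?_ ?_ ?_ ?_ ?_
    · refine Continuous.inv₀ ?_ (fun p => (hpos _ _ (Real.exp_pos _) (Real.exp_pos _)).ne')
      have hm : Continuous fun p : ℝ × ℝ => (Real.exp p.1, Real.exp p.2) := by fun_prop
      exact hc.comp_continuous hm (fun p => ⟨Real.exp_pos _, Real.exp_pos _⟩)
    · intro t t' z z' ht hz
      have h1 : F (Real.exp t) (Real.exp z) ≤ F (Real.exp t') (Real.exp z') :=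
        hmono _ _ _ _ (Real.exp_pos _) (Real.exp_pos _)
          (Real.exp_le_exp.2 ht) (Real.exp_le_exp.2 hz)
      exact inv_anti₀ (hpos _ _ (Real.exp_pos _) (Real.exp_pos _)) h1
    · intro t z
      have h1 : F (Real.exp t) (Real.exp z) ≤ Real.exp z :=
        le_trans (hmin _ _ (Real.exp_pos _) (Real.exp_pos _)) (min_le_right _ _)
      rw [Real.exp_neg]
      exact inv_anti₀ (hpos _ _ (Real.exp_pos _) (Real.exp_pos _)) h1
    · intro t z c
      have h1 : Real.exp (t + c) = Real.exp c * Real.exp t := by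
        rw [← Real.exp_add]; ring_nf
      have h2 : Real.exp (z + c) = Real.exp c * Real.exp z := by
        rw [← Real.exp_add]; ring_nf
      rw [h1, h2, hhomF _ _ _ (Real.exp_pos _) (Real.exp_pos _) (Real.exp_pos _),
        mul_inv, Real.exp_neg]
    · intro t ht
      have h1 := (hlimF (Real.exp t) (Real.exp_pos _)).2
      have h2 : Tendsto (fun z : ℝ => F (Real.exp t) (Real.exp z)) atTop
          (nhds (Real.exp t)) := h1.comp Real.tendsto_exp_atTop
      rw [Real.exp_neg]
      exact h2.inv₀ (Real.exp_pos t).ne'
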